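/- Let (R, m) be a two-dimensional regular local ring with m = (x, y). Then for every integer m ≥ 2, the intersection ⋂_{i=1}^{m-1} (x^{m-i}, y^i) equals m^{m-1}. -/

import Mathlib

open IsLocalRing



/-- A Noetherian module killed by a maximal ideal is Artinian. -/
lemma art1 {R M : Type*} [CommRing R] [AddCommGroup M] [Module R M]
    [IsNoetherian R M] {I : Ideal R} (hI : I.IsMaximal)
    (hann : ∀ r ∈ I, ∀ v : M, r • v = (0 : M)) :
    IsArtinian R M := by
  have key : ∀ N : Submodule R M, IsArtinian R N := by
    intro N
    refine Submodule.fg_induction (motive := fun N _ => IsArtinian R N) ?_ ?_ N (IsNoetherian.noetherian N)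
    · intro x
      -- span {x} is a simple-or-trivial module
      have hsub : ∀ W : Submodule R (Submodule.span R ({x} : Set M)),
          W = ⊥ ∨ W = ⊤ := by
        intro W
        by_cases hW : W = ⊥
        · exact Or.inl hW
        · right
          obtain ⟨v, hvW, hv0⟩ := (Submodule.ne_bot_iff W).mp hW
          obtain ⟨r, hr⟩ := (Submodule.mem_span_singleton).mp v.2
          have hrI : r ∉ I := by
            intro hrI
            exact hv0 (Subtype.ext (by rw [← hr]; exact hann r hrI x))
          obtain ⟨s, i, hiI, hsi⟩ := hI.exists_inv hrI
          set ξ : (Submodule.span R ({x} : Set M)) :=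
            ⟨x, Submodule.mem_span_singleton_self x⟩ with hξ
          have hvξ : v = r • ξ := Subtype.ext (by rw [← hr]; rfl)
          have hξv : ξ = s • v := by
            have h1 : (1 : R) • ξ = ξ := one_smul _ _
            have : ((s * r + i) : R) • ξ = ξ := by rw [hsi, one_smul]
            rw [add_smul, mul_smul, ← hvξ] at this
            have hiξ : i • ξ = 0 := Subtype.ext (hann i hiI x)
            rw [hiξ, add_zero] at this
            exact this.symm
          refine eq_top_iff.mpr fun w _ => ?_
          obtain ⟨t, ht⟩ := (Submodule.mem_span_singleton).mp w.2
          have hwξ : w = t • ξ := Subtype.ext (by rw [← ht]; rfl)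
          rw [hwξ, hξv, ← mul_smul]
          exact W.smul_mem _ hvW
      constructor
      constructor
      intro a
      have elim : ∀ b : Submodule R (Submodule.span R ({x} : Set M)),
          b = ⊥ → Acc (· < ·) b := by
        rintro b rfl
        exact Acc.intro _ fun c hc => absurd hc (by simp)
      rcases hsub a with h | h
      · exact elim a h
      · refine Acc.intro _ fun c hc => ?_
        rcases hsub c with h' | h'
        · exact elim c h'
        · rw [h', h] at hc; exact absurd hc (lt_irrefl _)
    · intro N₁ N₂ _ _ h1 h2; exact isArtinian_sup N₁ N₂
  have := key ⊤
  exact isArtinian_of_linearEquiv (Submodule.topEquiv)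

lemma art2 {R : Type*} [CommRing R] [IsNoetherianRing R] {I : Ideal R} (hI : I.IsMaximal)
    (N : ℕ) : IsArtinian R (R ⧸ (I ^ N : Ideal R)) := by
  induction N with
  | zero =>
    have : Subsingleton (R ⧸ (I ^ 0 : Ideal R)) := by
      rw [pow_zero, Ideal.one_eq_top]
      exact Submodule.Quotient.subsingleton_iff.mpr rfl
    infer_instance
  | succ n ih =>
    set p : Submodule R R := (I ^ (n + 1) : Ideal R)
    set q : Submodule R R := (I ^ n : Ideal R)
    have hpq : p ≤ q := Ideal.pow_le_pow_right (Nat.le_succ n)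
    refine (isArtinian_iff_submodule_quotient (q.map p.mkQ)).mpr ⟨?_, ?_⟩
    · refine art1 hI ?_
      rintro r hr ⟨v, hv⟩
      obtain ⟨w, hw, rfl⟩ := hv
      refine Subtype.ext ?_
      show r • Submodule.Quotient.mk w = (0 : R ⧸ p)
      rw [← Submodule.Quotient.mk_smul, Submodule.Quotient.mk_eq_zero]
      have : r • w ∈ I * I ^ n := Ideal.mul_mem_mul hr hw
      rwa [← pow_succ'] at this
    · exact isArtinian_of_linearEquiv (Submodule.quotientQuotientEquivQuotient p q hpq).symm

/-- Baby principal ideal theorem: if some power of `x` lies in `(y)` (so that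
`rad (y) = m`), there is no prime strictly between `⊥` and `m`. -/
lemma pit {R : Type*} [CommRing R] [IsDomain R] [IsNoetherianRing R] [IsLocalRing R]
    (x y : R) (hm : maximalIdeal R = Ideal.span {x, y}) {n : ℕ}
    (hxy : x ^ n ∈ Ideal.span ({y} : Set R))
    (q : Ideal R) (hq : q.IsPrime) (hq0 : q ≠ ⊥) (hqm : q < maximalIdeal R) : False := by
  haveI := hq
  -- the maximal ideal is contained in the radical of (y)
  have hmrad : maximalIdeal R ≤ (Ideal.span ({y} : Set R)).radical := by
    rw [hm, Ideal.span_le]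
    rintro z hz
    rcases hz with rfl | hz
    · exact ⟨n, hxy⟩
    · rcases hz with rfl
      exact Ideal.le_radical (Ideal.subset_span rfl)
  obtain ⟨N, hN⟩ := Ideal.exists_pow_le_of_le_radical_of_fg hmrad
    (IsNoetherian.noetherian _)
  have hyq : y ∉ q := by
    intro hyq
    have : Ideal.span ({y} : Set R) ≤ q := (Ideal.span_le).mpr (by simpa using hyq)
    have : maximalIdeal R ≤ q := by
      calc maximalIdeal R ≤ (Ideal.span ({y} : Set R)).radical := hmrad
        _ ≤ q.radical := Ideal.radical_mono this
        _ = q := hq.radical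
    exact hqm.not_ge this
  -- localization at q
  set A := Localization.AtPrime q
  set φ := algebraMap R A with hφ
  haveI : IsNoetherianRing A := IsLocalization.isNoetherianRing q.primeCompl A ‹_›
  haveI : IsDomain A := IsLocalization.isDomain_localization q.primeCompl_le_nonZeroDivisors
  -- symbolic powers
  set I : ℕ → Ideal R := fun k => Ideal.comap φ (Ideal.map φ (q ^ k)) with hI
  have hanti : ∀ k, I (k + 1) ≤ I k := fun k =>
    Ideal.comap_mono (Ideal.map_mono (Ideal.pow_le_pow_right (Nat.le_succ k)))
  set J : ℕ → Ideal R := fun k => I k ⊔ Ideal.span ({y} : Set R) with hJ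
  have hyJ : ∀ k, (maximalIdeal R) ^ N ≤ J k := fun k => le_trans hN le_sup_right
  -- stabilization using the Artinian quotient
  set p : Submodule R R := ((maximalIdeal R) ^ N : Ideal R) with hp
  haveI : IsArtinian R (R ⧸ p) := art2 (IsLocalRing.maximalIdeal.isMaximal R) N
  have hmono : Monotone (fun k => OrderDual.toDual (Submodule.map p.mkQ (J k))) := by
    intro a b hab
    have : J b ≤ J a := by
      refine sup_le_sup_right ?_ _
      exact Ideal.comap_mono (Ideal.map_mono (Ideal.pow_le_pow_right hab))
    exact Submodule.map_mono this
  obtain ⟨n0, hst⟩ := IsArtinian.monotone_stabilizes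
    ⟨fun k => OrderDual.toDual (Submodule.map p.mkQ (J k)), hmono⟩
  have hJeq : J n0 = J (n0 + 1) := by
    have h1 : Submodule.map p.mkQ (J n0) = Submodule.map p.mkQ (J (n0 + 1)) := hst (n0 + 1) (Nat.le_succ n0)
    have h2 : p ⊔ J n0 = p ⊔ J (n0 + 1) := by
      rw [← Submodule.comap_map_mkQ p (J n0), ← Submodule.comap_map_mkQ p (J (n0+1)), h1]
    rwa [sup_eq_right.mpr (hyJ n0), sup_eq_right.mpr (hyJ (n0+1))] at h2
  -- saturation property + Nakayama in R
  have hIle : I n0 ≤ I (n0 + 1) := by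
    have step : I n0 ≤ I (n0 + 1) ⊔ (maximalIdeal R) • (I n0) := by
      intro a ha
      have haJ : a ∈ J (n0 + 1) := by
        rw [← hJeq]; exact le_sup_left (α := Ideal R) ha
      obtain ⟨b, hb, c, hc, rfl⟩ := Submodule.mem_sup.mp haJ
      obtain ⟨d, rfl⟩ := Ideal.mem_span_singleton'.mp hc
      -- d * y ∈ I n0
      have hdy : d * y ∈ I n0 := by
        have : (b + d * y) - b ∈ I n0 := Submodule.sub_mem _ ha (hanti n0 hb)
        simpa using this
      have hd : d ∈ I n0 := by
        have hu : IsUnit (φ y) := IsLocalization.map_units (M := q.primeCompl) A ⟨y, hyq⟩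
        have : φ (d * y) ∈ Ideal.map φ (q ^ n0) := hdy
        rw [map_mul, mul_comm] at this
        exact (Ideal.unit_mul_mem_iff_mem _ hu).mp this
      refine Submodule.add_mem _ (Submodule.mem_sup_left hb) (Submodule.mem_sup_right ?_)
      have hym : y ∈ maximalIdeal R := by
        rw [hm]; exact Ideal.subset_span (by simp)
      rw [smul_eq_mul]
      simpa [mul_comm] using Ideal.mul_mem_mul hym hd
    exact Submodule.le_of_le_smul_of_le_jacobson_bot (IsNoetherian.noetherian _)
      (by rw [IsLocalRing.jacobson_eq_maximalIdeal ⊥ bot_ne_top]) step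
  -- transfer to the localization and apply Nakayama there
  have hQle : (q.map φ) ^ n0 ≤ (q.map φ) ^ (n0 + 1) := by
    rw [← Ideal.map_pow, ← Ideal.map_pow]
    calc Ideal.map φ (q ^ n0) = Ideal.map φ (I n0) := (Ideal.map_comap_map φ _).symm
      _ ≤ Ideal.map φ (I (n0 + 1)) := Ideal.map_mono hIle
      _ = Ideal.map φ (q ^ (n0 + 1)) := Ideal.map_comap_map φ _
  have hQbot : (q.map φ) ^ n0 = ⊥ := by
    have hjac : q.map φ ≤ Ideal.jacobson ⊥ := by
      rw [IsLocalRing.jacobson_eq_maximalIdeal ⊥ bot_ne_top,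
        ← Localization.AtPrime.map_eq_maximalIdeal]
    refine Submodule.eq_bot_of_le_smul_of_le_jacobson_bot (q.map φ) _
      (IsNoetherian.noetherian _) ?_ hjac
    rwa [Ideal.smul_eq_mul, ← pow_succ']
  obtain ⟨z, hzq, hz0⟩ := (Submodule.ne_bot_iff q).mp hq0
  have hφz : φ z ∈ q.map φ := Ideal.mem_map_of_mem φ hzq
  have : (φ z) ^ n0 = 0 := by
    have := Ideal.pow_mem_pow hφz n0
    rwa [hQbot, Submodule.mem_bot] at this
  have hzz : φ z = 0 := by
    rcases Nat.eq_zero_or_pos n0 with h | h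
    · rw [h, pow_zero] at this; exact absurd this one_ne_zero
    · exact pow_eq_zero_iff h.ne' |>.mp this
  exact hz0 (IsLocalization.injective A q.primeCompl_le_nonZeroDivisors
    (by rw [hzz, map_zero]))


lemma exists_middle_prime {R : Type*} [CommRing R] [IsLocalRing R]
    (hdim : ringKrullDim R = 2) :
    ∃ q : Ideal R, q.IsPrime ∧ q ≠ ⊥ ∧ q < maximalIdeal R := by
  have h2 : ∃ l : LTSeries (PrimeSpectrum R), 2 ≤ l.length := by
    by_contra h
    push_neg at h
    have hle : ringKrullDim R ≤ 1 := by
      show Order.krullDim (PrimeSpectrum R) ≤ 1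
      rw [Order.krullDim]
      exact iSup_le fun l => by exact_mod_cast Nat.lt_succ_iff.mp (h l)
    rw [hdim] at hle
    norm_num at hle
  obtain ⟨l, hl⟩ := h2
  set p0 := l ⟨0, by omega⟩
  set p1 := l ⟨1, by omega⟩
  set p2 := l ⟨2, by omega⟩
  have h01 : p0 < p1 := l.strictMono (by simp [Fin.lt_def])
  have h12 : p1 < p2 := l.strictMono (by simp [Fin.lt_def])
  refine ⟨p1.asIdeal, p1.isPrime, ?_, ?_⟩
  · intro hbot
    have : p0.asIdeal < p1.asIdeal := h01
    rw [hbot] at this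
    exact (not_lt_bot this)
  · have h2m : p2.asIdeal ≤ maximalIdeal R :=
      IsLocalRing.le_maximalIdeal p2.isPrime.ne_top
    exact lt_of_lt_of_le (show p1.asIdeal < p2.asIdeal from h12) h2m


lemma dvr_reg {S : Type*} [CommRing S] [IsNoetherianRing S] [IsLocalRing S] {t : S}
    (ht : maximalIdeal S = Ideal.span {t}) (htn : ∀ n : ℕ, t ^ n ≠ 0) :
    ∀ a : S, a * t = 0 → a = 0 := by
  intro a hat
  by_contra ha
  have hbot : (⨅ n : ℕ, maximalIdeal S ^ n) = ⊥ :=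
    Ideal.iInf_pow_eq_bot_of_isLocalRing _ (Ideal.IsMaximal.ne_top inferInstance)
  have hex : ∃ k, a ∉ maximalIdeal S ^ k := by
    by_contra hall
    push_neg at hall
    exact ha (by simpa [hbot] using Ideal.mem_iInf.mpr hall : a ∈ (⊥ : Ideal S))
  classical
  have hk : a ∉ maximalIdeal S ^ (Nat.find hex) := Nat.find_spec hex
  have hk1 : Nat.find hex ≠ 0 := by
    intro h0
    rw [h0, pow_zero, Ideal.one_eq_top] at hk
    exact hk trivial
  obtain ⟨j, hj⟩ := Nat.exists_eq_succ_of_ne_zero hk1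
  rw [hj] at hk
  have haj : a ∈ maximalIdeal S ^ j := by
    by_contra h
    exact Nat.find_min hex (by omega) h
  rw [ht, Ideal.span_singleton_pow] at haj hk
  obtain ⟨c, hc⟩ := Ideal.mem_span_singleton'.mp haj
  have hcu : IsUnit c := by
    by_contra hcu
    refine hk (Ideal.mem_span_singleton'.mpr ?_)
    have hcm : c ∈ maximalIdeal S := hcu
    rw [ht] at hcm
    obtain ⟨e, he⟩ := Ideal.mem_span_singleton'.mp hcm
    exact ⟨e, by rw [← hc, ← he, pow_succ']; ring⟩
  have : c * t ^ (j + 1) = 0 := by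
    rw [pow_succ, ← mul_assoc, hc, hat]
  exact htn (j + 1) ((hcu.mul_right_eq_zero).mp this)

lemma quot_reg {R : Type*} [CommRing R] [IsNoetherianRing R] [IsLocalRing R]
    (x y : R) (hym : y ∈ maximalIdeal R)
    (hmax : maximalIdeal R = Ideal.span {x, y})
    (hxn : ∀ n : ℕ, x ^ n ∉ Ideal.span ({y} : Set R)) :
    ∀ c : R, x * c ∈ Ideal.span ({y} : Set R) → c ∈ Ideal.span ({y} : Set R) := by
  intro c hc
  set I : Ideal R := Ideal.span ({y} : Set R) with hI
  have hInetop : I ≠ ⊤ := by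
    intro h
    exact (Ideal.IsMaximal.ne_top (inferInstance : (maximalIdeal R).IsMaximal))
      (top_le_iff.mp (h ▸ (Ideal.span_le.mpr (by simpa using hym))))
  haveI : Nontrivial (R ⧸ I) := Ideal.Quotient.nontrivial_iff.mpr hInetop
  haveI : IsLocalRing (R ⧸ I) :=
    IsLocalRing.of_surjective' (Ideal.Quotient.mk I) Ideal.Quotient.mk_surjective
  set π := Ideal.Quotient.mk I with hπ
  have hcomap : Ideal.comap π (maximalIdeal (R ⧸ I)) = maximalIdeal R :=
    IsLocalRing.eq_maximalIdeal
      (Ideal.comap_isMaximal_of_surjective π Ideal.Quotient.mk_surjective)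
  have hmapmax : maximalIdeal (R ⧸ I) = Ideal.map π (maximalIdeal R) := by
    rw [← hcomap, Ideal.map_comap_of_surjective π Ideal.Quotient.mk_surjective]
  have hπy : π y = 0 := Ideal.Quotient.eq_zero_iff_mem.mpr (Ideal.subset_span rfl)
  have hspan : maximalIdeal (R ⧸ I) = Ideal.span {π x} := by
    rw [hmapmax, hmax, Ideal.map_span, Set.image_pair, hπy]
    rw [Ideal.span_insert]
    simp only [Ideal.span_singleton_eq_bot.mpr rfl, sup_le_iff, le_refl, bot_le,
      sup_of_le_left]
  have htn' : ∀ n : ℕ, (π x) ^ n ≠ 0 := by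
    intro n h
    rw [← map_pow] at h
    exact hxn n (Ideal.Quotient.eq_zero_iff_mem.mp h)
  have h0 : π c * π x = 0 := by
    rw [← map_mul]
    exact Ideal.Quotient.eq_zero_iff_mem.mpr (by rwa [mul_comm])
  have := dvr_reg hspan htn' (π c) h0
  exact Ideal.Quotient.eq_zero_iff_mem.mp this


lemma reg_pow {R : Type*} [CommRing R] [IsDomain R] {x y : R} (hy0 : y ≠ 0)
    (hbase : ∀ c : R, x * c ∈ Ideal.span ({y} : Set R) → c ∈ Ideal.span ({y} : Set R)) :
    ∀ (i : ℕ) (c : R), x * c ∈ Ideal.span ({y ^ i} : Set R) →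
      c ∈ Ideal.span ({y ^ i} : Set R) := by
  intro i
  induction i with
  | zero => intro c _; simp [Ideal.mem_span_singleton]
  | succ i ih =>
    intro c hc
    obtain ⟨r, hr⟩ := Ideal.mem_span_singleton'.mp hc
    have hcy : c ∈ Ideal.span ({y} : Set R) := by
      refine hbase c ?_
      rw [← hr]
      exact Ideal.mem_span_singleton.mpr ⟨r * y ^ i, by ring⟩
    obtain ⟨c', hc'⟩ := Ideal.mem_span_singleton'.mp hcy
    have hy : y * (x * c') = y * (r * y ^ i) := by
      calc y * (x * c') = x * (c' * y) := by ring
        _ = x * c := by rw [hc']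
        _ = r * y ^ (i + 1) := hr.symm
        _ = y * (r * y ^ i) := by ring
    have hxc' : x * c' = r * y ^ i := mul_left_cancel₀ hy0 hy
    have := ih c' (hxc' ▸ Ideal.mem_span_singleton'.mpr ⟨r, rfl⟩)
    obtain ⟨s, hs⟩ := Ideal.mem_span_singleton'.mp this
    exact Ideal.mem_span_singleton'.mpr ⟨s, by rw [← hc', ← hs]; ring⟩

lemma pow_le_pair {R : Type*} [CommRing R] (x y : R) :
    ∀ (n i : ℕ), 1 ≤ i → i ≤ n →
      (Ideal.span {x, y} : Ideal R) ^ n ≤ Ideal.span {x ^ (n + 1 - i), y ^ i} := by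
  intro n
  induction n with
  | zero => intro i h1 h0; omega
  | succ n ih =>
    intro i h1 hin
    rw [pow_succ]
    refine Ideal.mul_le.mpr fun r hr s hs => ?_
    obtain ⟨a, b, hab⟩ := Ideal.mem_span_pair.mp hs
    have hx : r * x ∈ Ideal.span ({x ^ (n + 2 - i), y ^ i} : Set R) := by
      rcases Nat.lt_or_ge n i with h | h
      · -- i = n + 1
        have : n + 2 - i = 1 := by omega
        rw [this]
        exact Ideal.mem_span_pair.mpr ⟨r, 0, by ring⟩
      · obtain ⟨c, d, hcd⟩ := Ideal.mem_span_pair.mp (ih i h1 h hr)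
        have hpow : n + 2 - i = (n + 1 - i) + 1 := by omega
        refine Ideal.mem_span_pair.mpr ⟨c, d * x, ?_⟩
        rw [hpow, pow_succ, ← hcd]; ring
    have hy : r * y ∈ Ideal.span ({x ^ (n + 2 - i), y ^ i} : Set R) := by
      rcases Nat.lt_or_ge i 2 with h | h
      · -- i = 1
        have hi : i = 1 := by omega
        rw [hi]
        exact Ideal.mem_span_pair.mpr ⟨0, r, by ring⟩
      · obtain ⟨j, rfl⟩ : ∃ j, i = j + 1 := ⟨i - 1, by omega⟩
        obtain ⟨c, d, hcd⟩ := Ideal.mem_span_pair.mp (ih j (by omega) (by omega) hr)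
        have e1 : n + 1 - j = n + 2 - (j + 1) := by omega
        rw [e1] at hcd
        refine Ideal.mem_span_pair.mpr ⟨c * y, d, ?_⟩
        rw [← hcd]
        ring
    have : r * s = a * (r * x) + b * (r * y) := by rw [← hab]; ring
    rw [this]
    exact Ideal.add_mem _ (Ideal.mul_mem_left _ _ hx) (Ideal.mul_mem_left _ _ hy)

theorem stmt_2 (R : Type*) [CommRing R] [IsDomain R] [IsNoetherianRing R] [IsLocalRing R]
    (hdim : ringKrullDim R = 2) (x y : R)
    (hm : maximalIdeal R = Ideal.span {x, y})
    (m : ℕ) (hm2 : 2 ≤ m) :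
    ⨅ i ∈ Finset.Icc 1 (m - 1), (Ideal.span {x ^ (m - i), y ^ i} : Ideal R)
      = maximalIdeal R ^ (m - 1) := by
  obtain ⟨q, hqprime, hq0, hqm⟩ := exists_middle_prime hdim
  have hxn : ∀ n : ℕ, x ^ n ∉ Ideal.span ({y} : Set R) :=
    fun n h => absurd (pit x y hm h q hqprime hq0 hqm) not_false
  have hyn : ∀ n : ℕ, y ^ n ∉ Ideal.span ({x} : Set R) :=
    fun n h => absurd (pit y x (hm.trans (by rw [Set.pair_comm])) h q hqprime hq0 hqm) not_false
  have hym : y ∈ maximalIdeal R := by rw [hm]; exact Ideal.subset_span (by simp)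
  have hxm : x ∈ maximalIdeal R := by rw [hm]; exact Ideal.subset_span (by simp)
  have hy0 : y ≠ 0 := by
    intro h
    exact hyn 1 (by rw [h, pow_one]; exact Ideal.zero_mem _)
  have hxreg := reg_pow hy0 (quot_reg x y hym hm hxn)
  have claim : ∀ n : ℕ, 1 ≤ n →
      (⨅ i ∈ Finset.Icc 1 n, (Ideal.span {x ^ (n + 1 - i), y ^ i} : Ideal R))
        = maximalIdeal R ^ n := by
    intro n
    induction n with
    | zero => omega
    | succ n ih =>
      intro _
      rcases Nat.eq_zero_or_pos n with rfl | hn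
      · -- base case n = 1
        simp only [Finset.Icc_self]
        rw [show ((⨅ i ∈ ({1} : Finset ℕ), (Ideal.span {x ^ (0 + 1 + 1 - i), y ^ i} : Ideal R)))
            = Ideal.span {x ^ 1, y ^ 1} from by simp]
        rw [pow_one, pow_one, pow_one, hm]
      · have ihn := ih hn
        refine le_antisymm ?_ ?_
        · -- hard direction
          intro f hf
          simp only [Ideal.mem_iInf, Finset.mem_Icc] at hf
          have hftop := hf (n + 1) ⟨by omega, le_refl _⟩
          rw [show n + 1 + 1 - (n + 1) = 1 by omega, pow_one] at hftop
          obtain ⟨a, b, hab⟩ := Ideal.mem_span_pair.mp hftop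
          have ham : a ∈ maximalIdeal R ^ n := by
            rw [← ihn]
            simp only [Ideal.mem_iInf, Finset.mem_Icc]
            rintro i ⟨hi1, hin⟩
            obtain ⟨c, d, hcd⟩ := Ideal.mem_span_pair.mp (hf i ⟨hi1, by omega⟩)
            have hmem : x * (a - c * x ^ (n + 1 - i)) ∈ Ideal.span ({y ^ i} : Set R) := by
              refine Ideal.mem_span_singleton'.mpr ⟨d - b * y ^ (n + 1 - i), ?_⟩
              have e1 : n + 1 + 1 - i = (n + 1 - i) + 1 := by omega
              have e2 : n + 1 = (n + 1 - i) + i := by omega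
              rw [e1] at hcd
              calc (d - b * y ^ (n + 1 - i)) * y ^ i
                  = d * y ^ i - b * (y ^ (n + 1 - i) * y ^ i) := by ring
                _ = d * y ^ i - b * y ^ (n + 1) := by rw [← pow_add, ← e2]
                _ = (c * x ^ (n + 1 - i + 1) + d * y ^ i)
                    - (a * x + b * y ^ (n + 1)) + a * x - c * x ^ (n + 1 - i + 1) := by ring
                _ = f - f + a * x - c * x ^ (n + 1 - i + 1) := by rw [hcd, hab]
                _ = x * (a - c * x ^ (n + 1 - i)) := by rw [pow_succ]; ring
            obtain ⟨s, hs⟩ := Ideal.mem_span_singleton'.mp (hxreg i _ hmem)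
            exact Ideal.mem_span_pair.mpr ⟨c, s, by rw [hs]; ring⟩
          rw [← hab, pow_succ]
          refine Ideal.add_mem _ (Ideal.mul_mem_mul ham hxm) ?_
          refine Ideal.mul_mem_left _ _ ?_
          rw [← pow_succ]
          exact Ideal.pow_mem_pow hym (n + 1)
        · -- easy direction
          refine le_iInf fun i => le_iInf fun hi => ?_
          rw [Finset.mem_Icc] at hi
          rw [hm]
          exact pow_le_pair x y (n + 1) i hi.1 hi.2
  obtain ⟨n, rfl⟩ : ∃ n, m = n + 1 := ⟨m - 1, by omega⟩
  simp only [Nat.add_sub_cancel]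
  exact claim n (by omega)
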